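/- Let 1 < p < N, p* = Np/(N−p), let Ω ⊆ ℝ^N be a bounded nonempty open set, and let λ, μ > 0. Suppose w is C¹ on the closure of Ω with w > 0 in Ω, w = 0 on ∂Ω, ∫_Ω (|∇w|^p − λ w^p) dx > 0, and w belongs to the Nehari set, i.e. ∫_Ω |∇w|^p dx = ∫_Ω (λ w^p + w^{p*} − μ w) dx. Then for every t ≥ 0, I_μ(tw) ≤ I_μ(w), with equality if and only if t = 1; that is, max over t ≥ 0 of I_μ(tw) equals I_μ(w). -/

import Mathlib

open MeasureTheory Set

noncomputable section

/-- The critical Sobolev exponent `p* = Np/(N-p)`. -/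
def pStar (N : ℕ) (p : ℝ) : ℝ := N * p / (N - p)

/-- The energy functional `I_μ`. -/
def energyI (N : ℕ) (p lam μ : ℝ) (Ω : Set (EuclideanSpace ℝ (Fin N)))
    (u : EuclideanSpace ℝ (Fin N) → ℝ) : ℝ :=
  ∫ x in Ω, (‖gradient u x‖ ^ p / p - lam * u x ^ p / p
    - u x ^ pStar N p / pStar N p + μ * u x)

/-- If `w > 0` lies on the Nehari set and `∫_Ω (|∇w|^p - λ w^p) > 0`, then the
fibering map `t ↦ I_μ(t w)` attains its maximum over `t ≥ 0` exactly at `t = 1`. -/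
theorem nehari_fibering_max
    (N : ℕ) (p lam μ : ℝ) (Ω : Set (EuclideanSpace ℝ (Fin N)))
    (hp : 1 < p) (hpN : p < N)
    (hΩne : Ω.Nonempty) (hΩb : Bornology.IsBounded Ω) (hΩo : IsOpen Ω)
    (hlam : 0 < lam) (hμ : 0 < μ)
    (w : EuclideanSpace ℝ (Fin N) → ℝ) (hw : ContDiffOn ℝ 1 w (closure Ω))
    (hwpos : ∀ x ∈ Ω, 0 < w x) (hwbd : ∀ x ∈ frontier Ω, w x = 0)
    (hpos : 0 < ∫ x in Ω, (‖gradient w x‖ ^ p - lam * w x ^ p))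
    (hnehari : (∫ x in Ω, ‖gradient w x‖ ^ p) =
      ∫ x in Ω, (lam * w x ^ p + w x ^ pStar N p - μ * w x)) :
    ∀ t : ℝ, 0 ≤ t →
      energyI N p lam μ Ω (fun x => t * w x) ≤ energyI N p lam μ Ω w ∧
      (energyI N p lam μ Ω (fun x => t * w x) = energyI N p lam μ Ω w ↔ t = 1) := by
  intro t ht
  set q := pStar N p with hqdef
  have hppos : (0 : ℝ) < p := lt_trans one_pos hp
  have hNpos : (0 : ℝ) < N := lt_trans hppos hpN
  have hNp : (0 : ℝ) < (N : ℝ) - p := by linarith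
  have hpq : p < q := by
    rw [hqdef, pStar, lt_div_iff₀ hNp]
    nlinarith
  have hqpos : (0 : ℝ) < q := lt_trans hppos hpq
  -- compactness and measurability
  have hK : IsCompact (closure Ω) := hΩb.isCompact_closure
  have hwc : ContinuousOn w (closure Ω) := hw.continuousOn
  have hmeas : MeasurableSet Ω := hΩo.measurableSet
  have hdiff : ∀ x ∈ Ω, DifferentiableAt ℝ w x := by
    intro x hx
    have hnb : closure Ω ∈ nhds x := mem_nhds_iff.mpr ⟨Ω, subset_closure, hΩo, hx⟩
    exact (hw.contDiffAt hnb).differentiableAt one_ne_zero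
  -- integrability
  have hIw : IntegrableOn w Ω := (hwc.integrableOn_compact hK).mono_set subset_closure
  have hIwq : IntegrableOn (fun x => w x ^ q) Ω :=
    ((hwc.rpow_const (fun x _ => Or.inr hqpos.le)).integrableOn_compact hK).mono_set
      subset_closure
  have hIwp : IntegrableOn (fun x => w x ^ p) Ω :=
    ((hwc.rpow_const (fun x _ => Or.inr hppos.le)).integrableOn_compact hK).mono_set
      subset_closure
  have hIwpl : IntegrableOn (fun x => lam * w x ^ p) Ω := hIwp.const_mul lam
  have hIdiff : IntegrableOn (fun x => ‖gradient w x‖ ^ p - lam * w x ^ p) Ω := by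
    by_contra h
    rw [integral_undef h] at hpos
    exact lt_irrefl _ hpos
  have hIgrad : IntegrableOn (fun x => ‖gradient w x‖ ^ p) Ω := by
    refine (hIdiff.add hIwpl).congr (Filter.Eventually.of_forall fun x => ?_)
    simp only [Pi.add_apply]
    ring
  -- the three constants
  set A := ∫ x in Ω, (‖gradient w x‖ ^ p - lam * w x ^ p) with hAdef
  set B := ∫ x in Ω, w x ^ q with hBdef
  set C := ∫ x in Ω, w x with hCdef
  have hApos : 0 < A := hpos
  have hCnn : 0 ≤ C := by
    rw [hCdef]
    exact setIntegral_nonneg hmeas fun x hx => (hwpos x hx).le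
  have hnehari' : A = B - μ * C := by
    have hIsum : IntegrableOn (fun x => lam * w x ^ p + w x ^ q) Ω := hIwpl.add hIwq
    have h1 : ∫ x in Ω, (lam * w x ^ p + w x ^ q - μ * w x)
        = (∫ x in Ω, lam * w x ^ p) + B - μ * C := by
      rw [integral_sub hIsum (hIw.const_mul μ), integral_add hIwpl hIwq,
        integral_const_mul, integral_const_mul, ← hBdef, ← hCdef]
    have h2 : A = (∫ x in Ω, ‖gradient w x‖ ^ p) - ∫ x in Ω, lam * w x ^ p := by
      rw [hAdef, integral_sub hIgrad hIwpl]
    rw [h2, hnehari, h1]; ring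
  have hBpos : 0 < B := by nlinarith [mul_nonneg hμ.le hCnn]
  -- the fibering function
  set F : ℝ → ℝ := fun s => A / p * s ^ p - B / q * s ^ q + μ * C * s with hFdef
  have henergy : ∀ s : ℝ, 0 ≤ s → energyI N p lam μ Ω (fun x => s * w x) = F s := by
    intro s hs
    have hEq : EqOn
        (fun x => ‖gradient (fun y => s * w y) x‖ ^ p / p - lam * (s * w x) ^ p / p
          - (s * w x) ^ pStar N p / pStar N p + μ * (s * w x))
        (fun x => (s ^ p / p * (‖gradient w x‖ ^ p - lam * w x ^ p)
          - s ^ q / q * w x ^ q) + μ * s * w x) Ω := by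
      intro x hx
      have hdx := hdiff x hx
      have hg : gradient (fun y => s * w y) x = s • gradient w x := by
        unfold gradient
        rw [show (fun y => s * w y) = (fun y => s • w y) from rfl,
          fderiv_fun_const_smul hdx s, _root_.map_smul]
      have hwnn : 0 ≤ w x := (hwpos x hx).le
      simp only [hg, norm_smul, Real.norm_eq_abs, abs_of_nonneg hs, ← hqdef]
      rw [Real.mul_rpow hs (norm_nonneg _), Real.mul_rpow hs hwnn, Real.mul_rpow hs hwnn]
      ring
    have : energyI N p lam μ Ω (fun x => s * w x)
        = ∫ x in Ω, ((s ^ p / p * (‖gradient w x‖ ^ p - lam * w x ^ p)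
          - s ^ q / q * w x ^ q) + μ * s * w x) := by
      rw [energyI]
      exact setIntegral_congr_fun hmeas hEq
    have hI1 : IntegrableOn (fun x => s ^ p / p * (‖gradient w x‖ ^ p - lam * w x ^ p)) Ω :=
      hIdiff.const_mul _
    have hI2 : IntegrableOn (fun x => s ^ q / q * w x ^ q) Ω := hIwq.const_mul _
    have hI3 : IntegrableOn (fun x => μ * s * w x) Ω := hIw.const_mul _
    have hI12 : IntegrableOn
        (fun x => s ^ p / p * (‖gradient w x‖ ^ p - lam * w x ^ p) - s ^ q / q * w x ^ q) Ω :=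
      hI1.sub hI2
    rw [this, integral_add hI12 hI3, integral_sub hI1 hI2, integral_const_mul,
      integral_const_mul, integral_const_mul, ← hAdef, ← hBdef, ← hCdef, hFdef]
    ring
  have hE1 : energyI N p lam μ Ω w = F 1 := by
    have h1 := henergy 1 zero_le_one
    have hfun : (fun x => (1 : ℝ) * w x) = w := by funext x; exact one_mul _
    rwa [hfun] at h1
  -- calculus facts on F
  have hderiv : ∀ s : ℝ, 0 < s →
      HasDerivAt F (s ^ (p - 1) * A - s ^ (q - 1) * B + μ * C) s := by
    intro s hs
    have h1 : HasDerivAt (fun y : ℝ => y ^ p) (p * s ^ (p - 1)) s :=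
      Real.hasDerivAt_rpow_const (Or.inl hs.ne')
    have h2 : HasDerivAt (fun y : ℝ => y ^ q) (q * s ^ (q - 1)) s :=
      Real.hasDerivAt_rpow_const (Or.inl hs.ne')
    have h3 : HasDerivAt F (A / p * (p * s ^ (p - 1)) - B / q * (q * s ^ (q - 1))
        + μ * C * 1) s :=
      ((h1.const_mul (A / p)).sub (h2.const_mul (B / q))).add
        ((hasDerivAt_id s).const_mul (μ * C))
    convert h3 using 1
    field_simp
  have hFc : ContinuousOn F (Ici (0 : ℝ)) := by
    rw [hFdef]
    exact ((continuousOn_const.mul (continuousOn_id.rpow_const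
        fun x _ => Or.inr hppos.le)).sub
      (continuousOn_const.mul (continuousOn_id.rpow_const fun x _ => Or.inr hqpos.le))).add
      (continuousOn_const.mul continuousOn_id)
  have hmono : StrictMonoOn F (Icc (0 : ℝ) 1) := by
    apply strictMonoOn_of_deriv_pos (convex_Icc 0 1) (hFc.mono Icc_subset_Ici_self)
    intro s hs
    rw [interior_Icc] at hs
    rw [(hderiv s hs.1).deriv]
    have e1 : s ^ (q - 1) < s ^ (p - 1) :=
      Real.rpow_lt_rpow_of_exponent_gt hs.1 hs.2 (by linarith)
    have e2 : s ^ (p - 1) ≤ 1 := Real.rpow_le_one hs.1.le hs.2.le (by linarith)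
    nlinarith [mul_pos hApos (sub_pos.2 e1),
      mul_nonneg (mul_nonneg hμ.le hCnn) (by linarith : (0:ℝ) ≤ 1 - s ^ (q - 1))]
  have hanti : StrictAntiOn F (Ici (1 : ℝ)) := by
    apply strictAntiOn_of_deriv_neg (convex_Ici 1)
      (hFc.mono (Ici_subset_Ici.mpr zero_le_one))
    intro s hs
    rw [interior_Ici] at hs
    rw [(hderiv s (lt_trans one_pos hs)).deriv]
    have e1 : s ^ (p - 1) < s ^ (q - 1) :=
      Real.rpow_lt_rpow_of_exponent_lt hs (by linarith)
    have e2 : (1 : ℝ) < s ^ (q - 1) :=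
      Real.one_lt_rpow_iff_of_pos (lt_trans one_pos hs) |>.mpr (Or.inl ⟨hs, by linarith⟩)
    nlinarith [mul_pos hApos (sub_pos.2 e1),
      mul_nonneg (mul_nonneg hμ.le hCnn) (by linarith : (0:ℝ) ≤ s ^ (q - 1) - 1)]
  rw [henergy t ht, hE1]
  rcases lt_trichotomy t 1 with h | h | h
  · have hlt : F t < F 1 := hmono ⟨ht, h.le⟩ ⟨zero_le_one, le_refl 1⟩ h
    exact ⟨hlt.le, ⟨fun he => absurd he hlt.ne, fun h1 => absurd (h1 ▸ h) (lt_irrefl 1)⟩⟩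
  · subst h
    exact ⟨le_refl _, ⟨fun _ => rfl, fun _ => rfl⟩⟩
  · have hlt : F t < F 1 := hanti (self_mem_Ici) h.le h
    exact ⟨hlt.le, ⟨fun he => absurd he hlt.ne, fun h1 => absurd (h1 ▸ h) (lt_irrefl 1)⟩⟩
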